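/- Let α, β, γ be the three complex roots of x³ − x − 1, with α the real root, and set a = (α+1)/((α−β)(α−γ)), b = (β+1)/((β−α)(β−γ)), c = (γ+1)/((γ−α)(γ−β)). Then a, b, c are the three roots of the polynomial 23x³ − 5x − 1; moreover |a|, |b|, |c| < 1, and in fact 0.54 < a < 0.55 and 0.28 < |b| = |c| < 0.29. -/

import Mathlib

/-- If `t * (2x+3) = x^2 + x` where `x^3 = x + 1`, then `23 t^3 - 5 t - 1 = 0`. -/
lemma binet_aux (x t : ℂ) (hx : x ^ 3 = x + 1) (hne : (2*x+3) ≠ 0)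
    (ht : t * (2*x+3) = x^2 + x) : 23 * t ^ 3 - 5 * t - 1 = 0 := by
  have key : 23*(x^2+x)^3 - 5*(x^2+x)*(2*x+3)^2 - (2*x+3)^3 = 0 := by
    linear_combination (23*x^3+69*x^2+72*x+27) * hx
  have h2 : (23 * t ^ 3 - 5 * t - 1) * (2*x+3)^3 = 0 := by
    linear_combination key + (23*t^2*(2*x+3)^2 + 23*t*(2*x+3)*(x^2+x)
      + 23*(x^2+x)^2 - 5*(2*x+3)^2) * ht
  rcases mul_eq_zero.mp h2 with h | h
  · exact h
  · exact absurd h (pow_ne_zero 3 hne)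

/-- The only real root of `23 x^3 - 5 x - 1` lies in `(0.54, 0.55)`. -/
lemma real_root_bounds (t : ℝ) (ht : 23 * t ^ 3 - 5 * t - 1 = 0) :
    0.54 < t ∧ t < 0.55 := by
  constructor
  · nlinarith [sq_nonneg (t - 0.545), sq_nonneg (t + 0.27), sq_nonneg (t + 0.3), sq_nonneg t]
  · nlinarith [sq_nonneg (t - 0.545), sq_nonneg (t + 0.27), sq_nonneg (t + 0.3), sq_nonneg t]

/-- The Binet coefficients `a, b, c` are the three roots of `23x³ − 5x − 1`; moreover
`|a|, |b|, |c| < 1`, `a` is real with `0.54 < a < 0.55`, and `0.28 < |b| = |c| < 0.29`. -/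
theorem binet_coefficients_minimal_polynomial
    (α β γ : ℂ) (hα : α ^ 3 = α + 1) (hαre : α.im = 0)
    (hβ : β ^ 3 = β + 1) (hβim : β.im ≠ 0) (hγ : γ = starRingEnd ℂ β)
    (a b c : ℂ)
    (ha : a = (α + 1) / ((α - β) * (α - γ)))
    (hb : b = (β + 1) / ((β - α) * (β - γ)))
    (hc : c = (γ + 1) / ((γ - α) * (γ - β))) :
    23 * a ^ 3 - 5 * a - 1 = 0 ∧ 23 * b ^ 3 - 5 * b - 1 = 0 ∧ 23 * c ^ 3 - 5 * c - 1 = 0 ∧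
      ‖a‖ < 1 ∧ ‖b‖ < 1 ∧ ‖c‖ < 1 ∧
      a.im = 0 ∧ 0.54 < a.re ∧ a.re < 0.55 ∧
      ‖b‖ = ‖c‖ ∧ 0.28 < ‖b‖ ∧ ‖b‖ < 0.29 := by
  -- basic facts about the roots
  have hγim : γ.im = -β.im := by rw [hγ]; simp
  have hγ3 : γ ^ 3 = γ + 1 := by
    rw [hγ, ← map_pow, hβ, map_add, map_one]
  have hαβ : α ≠ β := fun h => hβim (h ▸ hαre)
  have hαγ : α ≠ γ := fun h => hβim (by simp [← h, hαre] at hγim ⊢; linarith [hγim])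
  have hβγ : β ≠ γ := by
    intro h
    apply hβim
    have hbg : β.im = γ.im := by rw [h]
    linarith [hγim, hbg]
  have hαβ' : α - β ≠ 0 := sub_ne_zero.mpr hαβ
  have hαγ' : α - γ ≠ 0 := sub_ne_zero.mpr hαγ
  have hβγ' : β - γ ≠ 0 := sub_ne_zero.mpr hβγ
  -- symmetric function relations
  have h1 : α^2 + α*β + β^2 = 1 := by
    have h : (α - β) * (α^2 + α*β + β^2 - 1) = 0 := by linear_combination hα - hβ
    have := (mul_eq_zero.mp h).resolve_left hαβ'
    linear_combination this
  have h2 : β^2 + β*γ + γ^2 = 1 := by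
    have h : (β - γ) * (β^2 + β*γ + γ^2 - 1) = 0 := by linear_combination hβ - hγ3
    have := (mul_eq_zero.mp h).resolve_left hβγ'
    linear_combination this
  have e1 : α + β + γ = 0 := by
    have h : (α - γ) * (α + β + γ) = 0 := by linear_combination h1 - h2
    exact (mul_eq_zero.mp h).resolve_left hαγ'
  have e2 : α*β + β*γ + γ*α = -1 := by linear_combination (α + β) * e1 - h1
  have e3 : α*β*γ = 1 := by linear_combination hα + α*e2 - α^2*e1
  -- nonvanishing of 2x+3 at the roots
  have hden : ∀ x : ℂ, x ^ 3 = x + 1 → (2*x+3) ≠ 0 := by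
    intro x hx h
    have hx' : x = -3/2 := by linear_combination h/2
    rw [hx'] at hx; norm_num at hx
  have hdα := hden α hα
  have hdβ := hden β hβ
  have hdγ := hden γ hγ3
  -- the linear relations t * (2x+3) = x^2+x
  have ha' : a * (2*α+3) = α^2 + α := by
    have hd : (α - β) * (α - γ) * α = 2*α+3 := by
      linear_combination 2*hα - α^2*e1 + e3
    rw [ha, div_mul_eq_mul_div, div_eq_iff (mul_ne_zero hαβ' hαγ')]
    linear_combination (-(α+1))*hd
  have hb' : b * (2*β+3) = β^2 + β := by
    have hd : (β - α) * (β - γ) * β = 2*β+3 := by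
      linear_combination 2*hβ - β^2*e1 + e3
    rw [hb, div_mul_eq_mul_div,
      div_eq_iff (mul_ne_zero (sub_ne_zero.mpr hαβ.symm) hβγ')]
    linear_combination (-(β+1))*hd
  have hc' : c * (2*γ+3) = γ^2 + γ := by
    have hd : (γ - α) * (γ - β) * γ = 2*γ+3 := by
      linear_combination 2*hγ3 - γ^2*e1 + e3
    rw [hc, div_mul_eq_mul_div,
      div_eq_iff (mul_ne_zero (sub_ne_zero.mpr hαγ.symm) (sub_ne_zero.mpr hβγ.symm))]
    linear_combination (-(γ+1))*hd
  have pa := binet_aux α a hα hdα ha'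
  have pb := binet_aux β b hβ hdβ hb'
  have pc := binet_aux γ c hγ3 hdγ hc'
  -- a is real
  set r : ℝ := α.re with hr
  have hαr : α = (r : ℂ) := Complex.ext rfl (by simp [hαre])
  have hr3 : r ^ 3 = r + 1 := by
    have h := hα
    rw [hαr] at h
    exact_mod_cast h
  have hdr : (2*r+3) ≠ 0 := by
    intro h
    have : r = -3/2 := by linarith
    rw [this] at hr3; norm_num at hr3
  set s : ℝ := (r^2+r)/(2*r+3) with hs
  have hdrC : ((2*r+3 : ℝ) : ℂ) ≠ 0 := Complex.ofReal_ne_zero.mpr hdr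
  have hat : a = (s : ℂ) := by
    rw [hs, Complex.ofReal_div, eq_div_iff hdrC]
    rw [hαr] at ha'
    push_cast
    linear_combination ha'
  have ha_im : a.im = 0 := by rw [hat]; simp
  have ha_re : a.re = s := by rw [hat]; simp
  have pa' : 23 * s ^ 3 - 5 * s - 1 = 0 := by
    have h := pa
    rw [hat] at h
    exact_mod_cast (by push_cast at h ⊢; linear_combination h : ((23*s^3-5*s-1 : ℝ) : ℂ) = 0)
  obtain ⟨hs1, hs2⟩ := real_root_bounds s pa'
  -- c is the conjugate of b
  have hconjα : starRingEnd ℂ α = α := Complex.conj_eq_iff_im.mpr hαre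
  have hconjγ : starRingEnd ℂ γ = β := by rw [hγ]; exact Complex.conj_conj β
  have hcb : c = starRingEnd ℂ b := by
    rw [hb, hc, map_div₀, map_mul, map_add, map_sub, map_sub, map_one, hconjα, hconjγ, ← hγ]
  have habs_bc : ‖b‖ = ‖c‖ := by
    rw [hcb, Complex.norm_conj]
  -- 23 a b c = 1
  have h23 : (2*α+3)*(2*β+3)*(2*γ+3) = 23 := by
    linear_combination 8*e3 + 12*e2 + 18*e1
  have hnum : (α^2+α)*((β^2+β)*(γ^2+γ)) = 1 := by
    linear_combination (α*β*γ + α*β+β*γ+γ*α + α+β+γ + 2)*e3 + e2 + e1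
  have hkey : (a*b*c) * 23 = 1 := by
    calc (a*b*c)*23 = (a*b*c)*((2*α+3)*(2*β+3)*(2*γ+3)) := by rw [h23]
    _ = (a*(2*α+3))*((b*(2*β+3))*(c*(2*γ+3))) := by ring
    _ = (α^2+α)*((β^2+β)*(γ^2+γ)) := by rw [ha', hb', hc']
    _ = 1 := hnum
  have hs0 : (0:ℝ) < s := by linarith
  have hnsq : Complex.normSq b * (23*s) = 1 := by
    have h : ((Complex.normSq b * (23*s) : ℝ) : ℂ) = ((1:ℝ) : ℂ) := by
      push_cast
      rw [← Complex.mul_conj, ← hcb, ← hat]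
      linear_combination hkey
    exact_mod_cast h
  have habs_sq : ‖b‖^2 * (23*s) = 1 := by rw [Complex.sq_norm]; exact hnsq
  have hb0 : (0:ℝ) ≤ ‖b‖ := norm_nonneg _
  have hblt : ‖b‖ < 0.29 := by nlinarith [habs_sq, hs1, hb0]
  have hbgt : 0.28 < ‖b‖ := by nlinarith [habs_sq, hs2, hb0]
  refine ⟨pa, pb, pc, ?_, by linarith, by rw [← habs_bc]; linarith, ha_im,
    by rw [ha_re]; exact hs1, by rw [ha_re]; exact hs2, habs_bc, hbgt, hblt⟩
  rw [hat, Complex.norm_real, Real.norm_eq_abs]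
  rw [abs_lt]
  constructor <;> linarith
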